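/- Let U and V be types, S : Finset U, n ∈ ℕ, and for each i ∈ Fin n a cardinality constraint (S, B i, k i) with the same selection S, where the B i : Finset V are nonempty and pairwise disjoint and k i ∈ ℕ. Assume there is a value v₀ ∈ V with v₀ ∉ B i for every i. Then there exists an assignment g : U → V satisfying every constraint (for each i the number of x ∈ S with g x ∈ B i equals k i) if and only if the sum of the k i over all i ∈ Fin n is at most the cardinality of S. -/

import Mathlib

private lemma aux_mem {V : Type*} [DecidableEq V] {A C : Finset V} (h : A ∩ C = ∅)
    {a : V} (ha : a ∈ A) : a ∉ C := fun hc =>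
  (Finset.eq_empty_iff_forall_notMem.mp h a) (Finset.mem_inter.mpr ⟨ha, hc⟩)

private lemma aux_exists {U V : Type*} [DecidableEq U] [DecidableEq V] (v₀ : V) :
    ∀ (n : ℕ) (S : Finset U) (B : Fin n → Finset V) (k : Fin n → ℕ),
      (∀ i, (B i).Nonempty) → (∀ i j, i ≠ j → B i ∩ B j = ∅) → (∀ i, v₀ ∉ B i) →
      (∑ i, k i) ≤ S.card →
      ∃ g : U → V, (∀ i, (S.filter (fun x => g x ∈ B i)).card = k i) ∧
        ∀ x, g x = v₀ ∨ ∃ i, g x ∈ B i := by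
  intro n
  induction n with
  | zero => intro S B k _ _ _ _; exact ⟨fun _ => v₀, fun i => i.elim0, fun _ => Or.inl rfl⟩
  | succ n ih =>
    intro S B k hB hdisj hv₀ hsum
    rw [Fin.sum_univ_succ] at hsum
    obtain ⟨T, hTS, hTcard⟩ := Finset.exists_subset_card_eq (s := S) (n := k 0)
      (le_trans (Nat.le_add_right _ _) hsum)
    obtain ⟨g', hg'1, hg'2⟩ := ih (S \ T) (fun i => B i.succ) (fun i => k i.succ)
      (fun i => hB i.succ) (fun i j hij => hdisj i.succ j.succ (by simpa using hij))
      (fun i => hv₀ i.succ)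
      (by rw [Finset.card_sdiff_of_subset hTS, hTcard]
          exact Nat.le_sub_of_add_le (by rw [Nat.add_comm]; exact hsum))
    obtain ⟨b₀, hb₀⟩ := hB 0
    refine ⟨fun x => if x ∈ T then b₀ else g' x, ?_, ?_⟩
    · intro i
      refine Fin.cases ?_ ?_ i
      · have : S.filter (fun x => (if x ∈ T then b₀ else g' x) ∈ B 0) = T := by
          ext x
          simp only [Finset.mem_filter]
          constructor
          · rintro ⟨hxS, hx⟩
            by_contra hxT
            rw [if_neg hxT] at hx
            rcases hg'2 x with h | ⟨j, hj⟩
            · rw [h] at hx; exact hv₀ 0 hx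
            · exact aux_mem (hdisj j.succ 0 (Fin.succ_ne_zero j)) hj hx
          · intro hxT
            exact ⟨hTS hxT, by rw [if_pos hxT]; exact hb₀⟩
        rw [this, hTcard]
      · intro j
        rw [← hg'1 j]
        congr 1
        ext x
        simp only [Finset.mem_filter, Finset.mem_sdiff]
        constructor
        · rintro ⟨hxS, hx⟩
          by_cases hxT : x ∈ T
          · rw [if_pos hxT] at hx
            exact absurd hx (aux_mem (hdisj 0 j.succ (Fin.succ_ne_zero j).symm) hb₀)
          · rw [if_neg hxT] at hx; exact ⟨⟨hxS, hxT⟩, hx⟩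
        · rintro ⟨⟨hxS, hxT⟩, hx⟩
          exact ⟨hxS, by rw [if_neg hxT]; exact hx⟩
    · intro x
      by_cases hxT : x ∈ T
      · exact Or.inr ⟨0, by simp [hxT, hb₀]⟩
      · simp only [if_neg hxT]
        rcases hg'2 x with h | ⟨j, hj⟩
        · exact Or.inl h
        · exact Or.inr ⟨j.succ, hj⟩

/-- Satisfiability of cardinality constraints with a common selection and
pairwise disjoint value sets: a satisfying assignment exists iff the sum of
the targets fits in the selection. -/
theorem stmt_7 {U V : Type*} [DecidableEq U] [DecidableEq V]
    (S : Finset U) (n : ℕ)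
    (B : Fin n → Finset V) (k : Fin n → ℕ)
    (hB : ∀ i, (B i).Nonempty)
    (hdisj : ∀ i j, i ≠ j → B i ∩ B j = ∅)
    (v₀ : V) (hv₀ : ∀ i, v₀ ∉ B i) :
    (∃ g : U → V, ∀ i, (S.filter (fun x => g x ∈ B i)).card = k i) ↔
      (∑ i : Fin n, k i) ≤ S.card := by
  constructor
  · rintro ⟨g, hg⟩
    have hdisj' : ∀ i ∈ Finset.univ, ∀ j ∈ Finset.univ, i ≠ j →
        Disjoint (S.filter (fun x => g x ∈ B i)) (S.filter (fun x => g x ∈ B j)) := by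
      intro i _ j _ hij
      rw [Finset.disjoint_left]
      intro x hxi hxj
      simp only [Finset.mem_filter] at hxi hxj
      exact aux_mem (hdisj i j hij) hxi.2 hxj.2
    calc ∑ i : Fin n, k i = ∑ i : Fin n, (S.filter (fun x => g x ∈ B i)).card := by
          simp [hg]
      _ = (Finset.univ.biUnion (fun i => S.filter (fun x => g x ∈ B i))).card :=
          (Finset.card_biUnion hdisj').symm
      _ ≤ S.card := Finset.card_le_card (by
          intro x hx
          simp only [Finset.mem_biUnion, Finset.mem_filter] at hx
          obtain ⟨i, _, hxS, _⟩ := hx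
          exact hxS)
  · intro h
    obtain ⟨g, hg, _⟩ := aux_exists v₀ n S B k hB hdisj hv₀ h
    exact ⟨g, hg⟩
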